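/- Let φ be a CNF formula with n variables, t literal occurrences, and m clauses. Define the vertex-weighted graph G_φ on seven cliques C¹,…,C⁷ as follows: C¹ has vertices x_j¹ (weight ∞), C² has vertices x_j^{2T}, x_j^{2F} (weight 1), C³–C⁶ each have one vertex per literal occurrence l_i³, l_i⁴, l_i⁵, l_i⁶ (weights ∞, 1, ∞, 1 respectively), C⁷ has vertices c_k⁷ (weight ∞), plus weight-0 dummy vertices d⁴ ∈ C⁴ and d⁶ ∈ C⁶. Non-clique edges: x_j¹x_j^{2T}, x_j¹x_j^{2F}; x_j^{2T}l_i³ when l_i = x_j and x_j^{2F}l_i³ when l_i = ¬x_j; the paths l_i³l_i⁴l_i⁵l_i⁶; and c_k⁷l_i⁶ when l_i occurs in c_k. Then G_φ has a dominating set of total weight at most n + t if and only if φ is satisfiable. -/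

import Mathlib

structure CNF (n : ℕ) where
  clauses : List (List (Bool × Fin n))

def CNF.Satisfiable {n : ℕ} (φ : CNF n) : Prop :=
  ∃ σ : Fin n → Bool, ∀ c ∈ φ.clauses, ∃ l ∈ c, σ l.2 = l.1

abbrev CNF.Occ {n : ℕ} (φ : CNF n) :=
  Σ k : Fin φ.clauses.length, Fin (φ.clauses.get k).length

def CNF.lit {n : ℕ} (φ : CNF n) (o : φ.Occ) : Bool × Fin n :=
  (φ.clauses.get o.1).get o.2

def CNF.t {n : ℕ} (φ : CNF n) : ℕ := (φ.clauses.map List.length).sum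

/-- Vertices of the weighted gadget graph `G_φ` on seven cliques `C¹,…,C⁷`. -/
inductive WVert {n : ℕ} (φ : CNF n) : Type
  | x1 (j : Fin n)          -- C¹
  | x2T (j : Fin n)         -- C²
  | x2F (j : Fin n)         -- C²
  | l3 (o : φ.Occ)          -- C³
  | l4 (o : φ.Occ)          -- C⁴
  | l5 (o : φ.Occ)          -- C⁵
  | l6 (o : φ.Occ)          -- C⁶
  | c7 (k : Fin φ.clauses.length)  -- C⁷
  | d4                      -- dummy in C⁴
  | d6                      -- dummy in C⁶

/-- Which of the seven cliques a vertex belongs to. -/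
def grp {n : ℕ} {φ : CNF n} : WVert φ → Fin 7
  | .x1 _ => 0
  | .x2T _ => 1 | .x2F _ => 1
  | .l3 _ => 2
  | .l4 _ => 3 | .d4 => 3
  | .l5 _ => 4
  | .l6 _ => 5 | .d6 => 5
  | .c7 _ => 6

/-- Vertex weights: `⊤` (infinite) on `C¹, C³, C⁵, C⁷`, `0` on the dummies,
and `1` otherwise. -/
noncomputable def wt {n : ℕ} {φ : CNF n} : WVert φ → ENNReal
  | .x1 _ => ⊤ | .l3 _ => ⊤ | .l5 _ => ⊤ | .c7 _ => ⊤
  | .d4 => 0 | .d6 => 0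
  | .x2T _ => 1 | .x2F _ => 1 | .l4 _ => 1 | .l6 _ => 1

/-- The non-clique edges of `G_φ` (one direction; symmetrized by `fromRel`). -/
def wBase {n : ℕ} (φ : CNF n) : WVert φ → WVert φ → Prop
  | .x1 j, .x2T j' => j = j'
  | .x1 j, .x2F j' => j = j'
  | .x2T j, .l3 o => φ.lit o = (true, j)
  | .x2F j, .l3 o => φ.lit o = (false, j)
  | .l3 o, .l4 o' => o = o'
  | .l4 o, .l5 o' => o = o'
  | .l5 o, .l6 o' => o = o'
  | .c7 k, .l6 o => o.1 = k
  | _, _ => False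

/-- The weighted gadget graph: each `Cᵖ` is a clique, plus the non-clique edges. -/
def GphiW {n : ℕ} (φ : CNF n) : SimpleGraph (WVert φ) :=
  SimpleGraph.fromRel (fun u v => grp u = grp v ∨ wBase φ u v)

def IsDomSet {V : Type*} (G : SimpleGraph V) (D : Finset V) : Prop :=
  ∀ v, v ∉ D → ∃ d ∈ D, G.Adj d v

lemma sum_map_get' {α : Type*} (l : List α) (f : α → ℕ) :
    ∑ i : Fin l.length, f (l.get i) = (l.map f).sum := by
  induction l with
  | nil => simp
  | cons a tl ih =>
    simp only [List.length_cons, List.map_cons, List.sum_cons]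
    rw [Fin.sum_univ_succ, ← ih]
    rfl

lemma sum_union_le' {V : Type*} [DecidableEq V] (s t : Finset V) (f : V → ENNReal) :
    ∑ v ∈ s ∪ t, f v ≤ ∑ v ∈ s, f v + ∑ v ∈ t, f v :=
  le_trans le_self_add (le_of_eq (Finset.sum_union_inter))

lemma occ_card {n : ℕ} (φ : CNF n) : Fintype.card φ.Occ = φ.t := by
  rw [CNF.t, ← sum_map_get' φ.clauses List.length, Fintype.card_sigma]
  simp only [Fintype.card_fin]

theorem stmt_18 {n : ℕ} (φ : CNF n) (h2 : ∀ c ∈ φ.clauses, 2 ≤ c.length) :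
    (∃ D : Finset (WVert φ), IsDomSet (GphiW φ) D ∧
      ∑ v ∈ D, wt v ≤ (n : ENNReal) + (φ.t : ENNReal)) ↔
    φ.Satisfiable := by
  classical
  constructor
  · rintro ⟨D, hdom, hsum⟩
    have htop : ((n : ENNReal) + (φ.t : ENNReal)) ≠ ⊤ := by simp
    have hfin : ∀ v ∈ D, wt v ≠ ⊤ := by
      intro v hv hw
      have h1 : wt v ≤ ∑ u ∈ D, wt u := Finset.single_le_sum (fun i _ => zero_le) hv
      rw [hw, top_le_iff] at h1
      rw [h1] at hsum
      exact htop (top_le_iff.mp hsum)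
    -- each variable pair is hit
    have hx : ∀ j : Fin n, WVert.x2T j ∈ D ∨ WVert.x2F j ∈ D := by
      intro j
      obtain ⟨d, hd, hadj⟩ :=
        hdom (WVert.x1 j) (fun h => hfin _ h rfl)
      simp only [GphiW, SimpleGraph.fromRel_adj] at hadj
      obtain ⟨-, hr⟩ := hadj
      cases d with
      | x1 j' => exact absurd rfl (hfin _ hd)
      | l3 o => exact absurd rfl (hfin _ hd)
      | l5 o => exact absurd rfl (hfin _ hd)
      | c7 k => exact absurd rfl (hfin _ hd)
      | x2T j' =>
        simp only [grp, wBase] at hr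
        rcases hr with (h|h)|(h|h)
        · exact absurd h (by decide)
        · exact h.elim
        · exact absurd h (by decide)
        · exact Or.inl (h ▸ hd)
      | x2F j' =>
        simp only [grp, wBase] at hr
        rcases hr with (h|h)|(h|h)
        · exact absurd h (by decide)
        · exact h.elim
        · exact absurd h (by decide)
        · exact Or.inr (h ▸ hd)
      | l4 o =>
        simp only [grp, wBase] at hr
        rcases hr with (h|h)|(h|h) <;> first | exact absurd h (by decide) | exact h.elim
      | l6 o =>
        simp only [grp, wBase] at hr
        rcases hr with (h|h)|(h|h) <;> first | exact absurd h (by decide) | exact h.elim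
      | d4 =>
        simp only [grp, wBase] at hr
        rcases hr with (h|h)|(h|h) <;> first | exact absurd h (by decide) | exact h.elim
      | d6 =>
        simp only [grp, wBase] at hr
        rcases hr with (h|h)|(h|h) <;> first | exact absurd h (by decide) | exact h.elim
    -- each occurrence pair is hit
    have hl : ∀ o : φ.Occ, WVert.l4 o ∈ D ∨ WVert.l6 o ∈ D := by
      intro o
      obtain ⟨d, hd, hadj⟩ :=
        hdom (WVert.l5 o) (fun h => hfin _ h rfl)
      simp only [GphiW, SimpleGraph.fromRel_adj] at hadj
      obtain ⟨-, hr⟩ := hadj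
      cases d with
      | x1 j' => exact absurd rfl (hfin _ hd)
      | l3 o' => exact absurd rfl (hfin _ hd)
      | l5 o' => exact absurd rfl (hfin _ hd)
      | c7 k => exact absurd rfl (hfin _ hd)
      | l4 o' =>
        simp only [grp, wBase] at hr
        rcases hr with (h|h)|(h|h)
        · exact absurd h (by decide)
        · exact Or.inl (h ▸ hd)
        · exact absurd h (by decide)
        · exact h.elim
      | l6 o' =>
        simp only [grp, wBase] at hr
        rcases hr with (h|h)|(h|h)
        · exact absurd h (by decide)
        · exact h.elim
        · exact absurd h (by decide)
        · exact Or.inr (h ▸ hd)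
      | x2T j =>
        simp only [grp, wBase] at hr
        rcases hr with (h|h)|(h|h) <;> first | exact absurd h (by decide) | exact h.elim
      | x2F j =>
        simp only [grp, wBase] at hr
        rcases hr with (h|h)|(h|h) <;> first | exact absurd h (by decide) | exact h.elim
      | d4 =>
        simp only [grp, wBase] at hr
        rcases hr with (h|h)|(h|h) <;> first | exact absurd h (by decide) | exact h.elim
      | d6 =>
        simp only [grp, wBase] at hr
        rcases hr with (h|h)|(h|h) <;> first | exact absurd h (by decide) | exact h.elim
    -- canonical selection
    set F : Fin n ⊕ φ.Occ → WVert φ := fun i =>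
      match i with
      | .inl j => if WVert.x2T j ∈ D then WVert.x2T j else WVert.x2F j
      | .inr o => if WVert.l6 o ∈ D then WVert.l6 o else WVert.l4 o with hF
    have hFD : ∀ i, F i ∈ D := by
      rintro (j|o)
      · by_cases h : WVert.x2T j ∈ D
        · simpa [hF, h] using h
        · simpa [hF, h] using (hx j).resolve_left h
      · by_cases h : WVert.l6 o ∈ D
        · simpa [hF, h] using h
        · simpa [hF, h] using (hl o).resolve_right h
    have hFinj : Function.Injective F := by
      rintro (j|o) (j'|o') h <;> simp only [hF] at h <;> split_ifs at h <;>
        first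
          | exact WVert.noConfusion h
          | (injection h with h'; rw [h'])
    have himg : ∑ v ∈ Finset.univ.image F, wt v = (n : ENNReal) + (φ.t : ENNReal) := by
      rw [Finset.sum_image (fun a _ b _ h => hFinj h)]
      have h1 : ∀ i : Fin n ⊕ φ.Occ, wt (F i) = 1 := by
        rintro (j|o) <;> simp only [hF] <;> split_ifs <;> rfl
      rw [Finset.sum_congr rfl (fun i _ => h1 i), Finset.sum_const, Finset.card_univ,
        Fintype.card_sum, Fintype.card_fin, occ_card, nsmul_eq_mul, mul_one]
      push_cast
      ring
    have hsub : Finset.univ.image F ⊆ D := by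
      intro v hv
      obtain ⟨i, -, rfl⟩ := Finset.mem_image.mp hv
      exact hFD i
    have hzero : ∀ v ∈ D, v ∉ Finset.univ.image F → wt v = 0 := by
      have h1 := Finset.sum_sdiff (f := wt) hsub
      rw [himg] at h1
      have h2 : ∑ v ∈ D \ Finset.univ.image F, wt v + ((n : ENNReal) + (φ.t : ENNReal)) ≤
          0 + ((n : ENNReal) + (φ.t : ENNReal)) := by
        rw [zero_add, h1]; exact hsum
      have h3 := ENNReal.le_of_add_le_add_right htop h2
      have h4 : ∑ v ∈ D \ Finset.univ.image F, wt v = 0 := le_antisymm h3 zero_le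
      intro v hv hvi
      exact (Finset.sum_eq_zero_iff.mp h4) v (Finset.mem_sdiff.mpr ⟨hv, hvi⟩)
    have hxor : ∀ j : Fin n, ¬(WVert.x2T j ∈ D ∧ WVert.x2F j ∈ D) := by
      rintro j ⟨hT, hFj⟩
      have hni : (WVert.x2F j : WVert φ) ∉ Finset.univ.image F := by
        simp only [Finset.mem_image, not_exists]
        rintro (j'|o) ⟨-, h⟩
        · simp only [hF] at h
          split_ifs at h with hc
          all_goals first
            | exact WVert.noConfusion h
            | (injection h with h'; subst h'; exact hc hT)
        · simp only [hF] at h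
          split_ifs at h
          all_goals exact WVert.noConfusion h
      have := hzero _ hFj hni
      simp [wt] at this
    have hl46 : ∀ o : φ.Occ, WVert.l6 o ∈ D → WVert.l4 o ∉ D := by
      intro o h6 h4
      have hni : (WVert.l4 o : WVert φ) ∉ Finset.univ.image F := by
        simp only [Finset.mem_image, not_exists]
        rintro (j'|o') ⟨-, h⟩
        · simp only [hF] at h
          split_ifs at h
          all_goals exact WVert.noConfusion h
        · simp only [hF] at h
          split_ifs at h with hc
          all_goals first
            | exact WVert.noConfusion h
            | (injection h with h'; subst h'; exact hc h6)
      have := hzero _ h4 hni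
      simp [wt] at this
    -- build the assignment
    refine ⟨fun j => if WVert.x2T j ∈ D then true else false, ?_⟩
    intro c hc
    obtain ⟨k, hk⟩ := List.mem_iff_get.mp hc
    obtain ⟨d, hd, hadj⟩ := hdom (WVert.c7 k) (fun h => hfin _ h rfl)
    simp only [GphiW, SimpleGraph.fromRel_adj] at hadj
    obtain ⟨-, hr⟩ := hadj
    obtain ⟨o, ho1, ho6⟩ : ∃ o : φ.Occ, o.1 = k ∧ WVert.l6 o ∈ D := by
      cases d with
      | x1 j' => exact absurd rfl (hfin _ hd)
      | l3 o' => exact absurd rfl (hfin _ hd)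
      | l5 o' => exact absurd rfl (hfin _ hd)
      | c7 k' => exact absurd rfl (hfin _ hd)
      | l6 o' =>
        refine ⟨o', ?_, hd⟩
        simp only [grp, wBase] at hr
        rcases hr with (h|h)|(h|h)
        · exact absurd h (by decide)
        · exact h.elim
        · exact absurd h (by decide)
        · exact h
      | x2T j =>
        simp only [grp, wBase] at hr
        rcases hr with (h|h)|(h|h) <;> first | exact absurd h (by decide) | exact h.elim
      | x2F j =>
        simp only [grp, wBase] at hr
        rcases hr with (h|h)|(h|h) <;> first | exact absurd h (by decide) | exact h.elim
      | l4 o' =>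
        simp only [grp, wBase] at hr
        rcases hr with (h|h)|(h|h) <;> first | exact absurd h (by decide) | exact h.elim
      | d4 =>
        simp only [grp, wBase] at hr
        rcases hr with (h|h)|(h|h) <;> first | exact absurd h (by decide) | exact h.elim
      | d6 =>
        simp only [grp, wBase] at hr
        rcases hr with (h|h)|(h|h) <;> first | exact absurd h (by decide) | exact h.elim
    have h4 : WVert.l4 o ∉ D := hl46 _ ho6
    -- dominate l3
    obtain ⟨d', hd', hadj'⟩ := hdom (WVert.l3 o) (fun h => hfin _ h rfl)
    simp only [GphiW, SimpleGraph.fromRel_adj] at hadj'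
    obtain ⟨-, hr'⟩ := hadj'
    have hmem : φ.lit o ∈ c := by
      have h5 : φ.lit o ∈ φ.clauses.get o.1 := List.get_mem _ o.2
      rwa [ho1, hk] at h5
    have key : ∃ j : Fin n,
        (WVert.x2T j ∈ D ∧ φ.lit o = (true, j)) ∨
        (WVert.x2F j ∈ D ∧ φ.lit o = (false, j)) := by
      cases d' with
      | x1 j' => exact absurd rfl (hfin _ hd')
      | l3 o' => exact absurd rfl (hfin _ hd')
      | l5 o' => exact absurd rfl (hfin _ hd')
      | c7 k'' => exact absurd rfl (hfin _ hd')
      | x2T j =>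
        refine ⟨j, Or.inl ⟨hd', ?_⟩⟩
        simp only [grp, wBase] at hr'
        rcases hr' with (h|h)|(h|h)
        · exact absurd h (by decide)
        · exact h
        · exact absurd h (by decide)
        · exact h.elim
      | x2F j =>
        refine ⟨j, Or.inr ⟨hd', ?_⟩⟩
        simp only [grp, wBase] at hr'
        rcases hr' with (h|h)|(h|h)
        · exact absurd h (by decide)
        · exact h
        · exact absurd h (by decide)
        · exact h.elim
      | l4 o' =>
        simp only [grp, wBase] at hr'
        rcases hr' with (h|h)|(h|h)
        · exact absurd h (by decide)
        · exact h.elim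
        · exact absurd h (by decide)
        · exact absurd (h ▸ hd') h4
      | l6 o' =>
        simp only [grp, wBase] at hr'
        rcases hr' with (h|h)|(h|h) <;> first | exact absurd h (by decide) | exact h.elim
      | d4 =>
        simp only [grp, wBase] at hr'
        rcases hr' with (h|h)|(h|h) <;> first | exact absurd h (by decide) | exact h.elim
      | d6 =>
        simp only [grp, wBase] at hr'
        rcases hr' with (h|h)|(h|h) <;> first | exact absurd h (by decide) | exact h.elim
    obtain ⟨j, hj⟩ := key
    refine ⟨φ.lit o, hmem, ?_⟩
    rcases hj with ⟨hT, hlit⟩ | ⟨hFj, hlit⟩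
    · rw [hlit]
      simp [hT]
    · rw [hlit]
      have : WVert.x2T j ∉ D := fun h => hxor j ⟨h, hFj⟩
      simp [this]
  · rintro ⟨σ, hσ⟩
    set A : Finset (WVert φ) :=
      Finset.univ.image (fun j : Fin n => if σ j then WVert.x2T j else WVert.x2F j) with hA
    set B : Finset (WVert φ) :=
      Finset.univ.image (fun o : φ.Occ =>
        if σ (φ.lit o).2 = (φ.lit o).1 then WVert.l6 o else WVert.l4 o) with hB
    refine ⟨A ∪ B ∪ {WVert.d4, WVert.d6}, ?_, ?_⟩
    · intro v hv
      have hAmem : ∀ j : Fin n, (if σ j then WVert.x2T j else WVert.x2F j) ∈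
          A ∪ B ∪ ({WVert.d4, WVert.d6} : Finset (WVert φ)) := by
        intro j
        exact Finset.mem_union_left _ (Finset.mem_union_left _
          (Finset.mem_image.mpr ⟨j, Finset.mem_univ _, rfl⟩))
      have hBmem : ∀ o : φ.Occ,
          (if σ (φ.lit o).2 = (φ.lit o).1 then WVert.l6 o else WVert.l4 o) ∈
          A ∪ B ∪ ({WVert.d4, WVert.d6} : Finset (WVert φ)) := by
        intro o
        exact Finset.mem_union_left _ (Finset.mem_union_right _
          (Finset.mem_image.mpr ⟨o, Finset.mem_univ _, rfl⟩))
      have hd4 : (WVert.d4 : WVert φ) ∈ A ∪ B ∪ ({WVert.d4, WVert.d6} : Finset (WVert φ)) := by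
        simp
      have hd6 : (WVert.d6 : WVert φ) ∈ A ∪ B ∪ ({WVert.d4, WVert.d6} : Finset (WVert φ)) := by
        simp
      cases v with
      | x1 j =>
        refine ⟨_, hAmem j, ?_⟩
        simp only [GphiW, SimpleGraph.fromRel_adj]
        by_cases h : σ j <;> simp only [h, if_pos, if_neg, Bool.false_eq_true, ite_true, ite_false]
        · exact ⟨by simp, Or.inr (Or.inr rfl)⟩
        · exact ⟨by simp, Or.inr (Or.inr rfl)⟩
      | x2T j =>
        have h : ¬ σ j := by
          intro h
          exact hv (by simpa [h] using hAmem j)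
        refine ⟨WVert.x2F j, by simpa [h] using hAmem j, ?_⟩
        simp only [GphiW, SimpleGraph.fromRel_adj]
        exact ⟨by simp, Or.inl (Or.inl rfl)⟩
      | x2F j =>
        have h : σ j := by
          by_contra h
          exact hv (by simpa [h] using hAmem j)
        refine ⟨WVert.x2T j, by simpa [h] using hAmem j, ?_⟩
        simp only [GphiW, SimpleGraph.fromRel_adj]
        exact ⟨by simp, Or.inl (Or.inl rfl)⟩
      | l3 o =>
        by_cases hs : σ (φ.lit o).2 = (φ.lit o).1
        · rcases hp : φ.lit o with ⟨b, j⟩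
          rw [hp] at hs
          cases b with
          | true =>
            refine ⟨WVert.x2T j, by simpa [hs] using hAmem j, ?_⟩
            simp only [GphiW, SimpleGraph.fromRel_adj]
            exact ⟨by simp, Or.inl (Or.inr hp)⟩
          | false =>
            have hs' : ¬ σ j := by simp_all
            refine ⟨WVert.x2F j, by simpa [hs'] using hAmem j, ?_⟩
            simp only [GphiW, SimpleGraph.fromRel_adj]
            exact ⟨by simp, Or.inl (Or.inr hp)⟩
        · refine ⟨WVert.l4 o, by simpa [hs] using hBmem o, ?_⟩
          simp only [GphiW, SimpleGraph.fromRel_adj]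
          exact ⟨by simp, Or.inr (Or.inr rfl)⟩
      | l4 o =>
        refine ⟨WVert.d4, hd4, ?_⟩
        simp only [GphiW, SimpleGraph.fromRel_adj]
        exact ⟨by simp, Or.inl (Or.inl rfl)⟩
      | l5 o =>
        by_cases hs : σ (φ.lit o).2 = (φ.lit o).1
        · refine ⟨WVert.l6 o, by simpa [hs] using hBmem o, ?_⟩
          simp only [GphiW, SimpleGraph.fromRel_adj]
          exact ⟨by simp, Or.inr (Or.inr rfl)⟩
        · refine ⟨WVert.l4 o, by simpa [hs] using hBmem o, ?_⟩
          simp only [GphiW, SimpleGraph.fromRel_adj]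
          exact ⟨by simp, Or.inl (Or.inr rfl)⟩
      | l6 o =>
        refine ⟨WVert.d6, hd6, ?_⟩
        simp only [GphiW, SimpleGraph.fromRel_adj]
        exact ⟨by simp, Or.inl (Or.inl rfl)⟩
      | c7 k =>
        obtain ⟨l, hl, hsat⟩ := hσ (φ.clauses.get k) (List.get_mem _ k)
        obtain ⟨i, hi⟩ := List.mem_iff_get.mp hl
        have hlit : φ.lit (⟨k, i⟩ : φ.Occ) = l := hi
        have hs : σ (φ.lit (⟨k, i⟩ : φ.Occ)).2 = (φ.lit (⟨k, i⟩ : φ.Occ)).1 := by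
          rw [hlit]; exact hsat
        refine ⟨WVert.l6 (⟨k, i⟩ : φ.Occ), by simpa [hs] using hBmem ⟨k, i⟩, ?_⟩
        simp only [GphiW, SimpleGraph.fromRel_adj]
        exact ⟨by simp, Or.inr (Or.inr rfl)⟩
      | d4 => exact absurd (by simp : (WVert.d4 : WVert φ) ∈ _) hv
      | d6 => exact absurd (by simp : (WVert.d6 : WVert φ) ∈ _) hv
    · have hAsum : ∑ v ∈ A, wt v ≤ (n : ENNReal) := by
        have h1 : ∀ v ∈ A, wt v = 1 := by
          intro v hv
          obtain ⟨j, -, rfl⟩ := Finset.mem_image.mp hv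
          split_ifs <;> rfl
        rw [Finset.sum_congr rfl h1, Finset.sum_const, nsmul_eq_mul, mul_one]
        have h2 : A.card ≤ n := by
          rw [hA]
          exact le_trans Finset.card_image_le (by simp)
        exact_mod_cast h2
      have hBsum : ∑ v ∈ B, wt v ≤ (φ.t : ENNReal) := by
        have h1 : ∀ v ∈ B, wt v = 1 := by
          intro v hv
          obtain ⟨o, -, rfl⟩ := Finset.mem_image.mp hv
          split_ifs <;> rfl
        rw [Finset.sum_congr rfl h1, Finset.sum_const, nsmul_eq_mul, mul_one]
        have h2 : B.card ≤ φ.t := by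
          rw [hB]
          refine le_trans Finset.card_image_le ?_
          simp [Finset.card_univ, occ_card φ]
        exact_mod_cast h2
      have hdsum : ∑ v ∈ ({WVert.d4, WVert.d6} : Finset (WVert φ)), wt v = 0 := by
        rw [Finset.sum_pair (by simp)]
        simp [wt]
      calc ∑ v ∈ A ∪ B ∪ {WVert.d4, WVert.d6}, wt v
          ≤ ∑ v ∈ A ∪ B, wt v + ∑ v ∈ ({WVert.d4, WVert.d6} : Finset (WVert φ)), wt v :=
            sum_union_le' _ _ _
        _ ≤ (∑ v ∈ A, wt v + ∑ v ∈ B, wt v) + 0 := by rw [hdsum]; exact add_le_add (sum_union_le' _ _ _) le_rfl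
        _ ≤ ((n : ENNReal) + (φ.t : ENNReal)) + 0 := by
            exact add_le_add (add_le_add hAsum hBsum) le_rfl
        _ = (n : ENNReal) + (φ.t : ENNReal) := by rw [add_zero]
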